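/- For a triangular string algebra A = kQ/I, the following are equivalent: (i) HH^1(A) = 0; (ii) the underlying graph of Q is a tree; (iii) HH^i(A) = 0 for all i > 0; (iv) A is simply connected. -/

import Mathlib

/-!
Common framework for formalizing "Hochschild cohomology of triangular string
algebras and its ring structure" (Redondo–Román).

* Interval combinatorics model of Bardzell's `n`-concatenations along a directed
  path (a directed path is modelled by the line `ℕ`, a subpath by an interval,
  and a relation by the interval it occupies).
* A combinatorial model of a bound quiver `(Q, I)` with `I` a monomial ideal
  generated by a reduced set `R` of paths: paths are nonempty composable lists
  of arrows, `AP_n` is the set of supports of `n`-concatenations, `𝒫` is the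
  basis of `A = kQ/I` given by the paths not in `I`.
* The Hochschild complex `Hom_{E-E}(kAP_n, A) ≅ k(AP_n ∥ 𝒫)` of a (triangular)
  monomial algebra obtained from Bardzell's minimal resolution, with its
  differentials `F_n` realized as explicit matrices, and the Hochschild
  cohomology `HH^n(A)` defined as the cohomology of this complex (for monomial
  algebras this complex computes Hochschild cohomology, by Bardzell's theorem).
-/

attribute [local instance] Classical.propDecidable

noncomputable section

namespace Paper

/-! ### Interval model of concatenations along a directed path -/

/-- An interval `(s, t)` on the line `ℕ`: the model of a subpath of a fixed
directed path `T`, going from vertex `s` to vertex `t`. -/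
abbrev Iv := ℕ × ℕ

/-- `R` is a reduced set of relations along a directed path: every relation is a
path of length at least two, and no relation divides another one. -/
structure RelSet (R : Set Iv) : Prop where
  len : ∀ r ∈ R, r.1 + 2 ≤ r.2
  nodiv : ∀ r ∈ R, ∀ r' ∈ R, r.1 ≤ r'.1 → r'.2 ≤ r.2 → r = r'

/-- The window from which the `(i+1)`-st relation (0-based index `i ≥ 1`) of a
concatenation is chosen: `L_1 = {p ∈ R : s(p_1) < s(p) < t(p_1)}` and
`L_{j+1} = {p ∈ R : t(p_{j-1}) ≤ s(p) < t(p_j)}`. -/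
def cWindow (R : Set Iv) (p : ℕ → Iv) (i : ℕ) : Set Iv :=
  if i = 1 then {q | q ∈ R ∧ (p 0).1 < q.1 ∧ q.1 < (p 0).2}
  else {q | q ∈ R ∧ (p (i - 2)).2 ≤ q.1 ∧ q.1 < (p (i - 1)).2}

/-- `IsConcat R k p` : the relations `p 0, p 1, …, p (k-1)` form a
`(k+1)`-concatenation `(p_1, …, p_k)` in Bardzell's sense: each `p i` (for
`1 ≤ i < k`) is a relation of the corresponding window with minimal source. -/
def IsConcat (R : Set Iv) (k : ℕ) (p : ℕ → Iv) : Prop :=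
  p 0 ∈ R ∧ ∀ i, 1 ≤ i → i < k →
    (p i ∈ cWindow R p i ∧ ∀ q ∈ cWindow R p i, (p i).1 ≤ q.1)

/-- The dual window: `L_1^{op} = {q ∈ R : s(q_1) < t(q) < t(q_1)}` and
`L_{j+1}^{op} = {q ∈ R : s(q_j) < t(q) ≤ s(q_{j-1})}`. -/
def oWindow (R : Set Iv) (q : ℕ → Iv) (i : ℕ) : Set Iv :=
  if i = 1 then {r | r ∈ R ∧ (q 0).1 < r.2 ∧ r.2 < (q 0).2}
  else {r | r ∈ R ∧ (q (i - 1)).1 < r.2 ∧ r.2 ≤ (q (i - 2)).1}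

/-- `IsOpConcat R k q` : the relations `q 0, …, q (k-1)` form a
`(k+1)`-op-concatenation `(q_{k}, …, q_1)` (so `q 0 = q_k` is built first and
`q^j = q (k - j)` in the paper's upper-index notation): each `q i` (for
`1 ≤ i < k`) is a relation of the corresponding dual window with maximal
target. -/
def IsOpConcat (R : Set Iv) (k : ℕ) (q : ℕ → Iv) : Prop :=
  q 0 ∈ R ∧ ∀ i, 1 ≤ i → i < k →
    (q i ∈ oWindow R q i ∧ ∀ r ∈ oWindow R q i, r.2 ≤ (q i).2)

/-- `IsSupport R n w` : the interval `w` is the support of an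
`n`-concatenation (for `n = 0` a vertex, for `n = 1` an arrow). -/
def IsSupport (R : Set Iv) : ℕ → Iv → Prop
  | 0, w => w.2 = w.1
  | 1, w => w.2 = w.1 + 1
  | (n + 2), w => ∃ p : ℕ → Iv, IsConcat R (n + 1) p ∧ (p 0).1 = w.1 ∧ (p n).2 = w.2

/-- `IsOpSupport R n w` : the interval `w` is the support of an
`n`-op-concatenation. -/
def IsOpSupport (R : Set Iv) : ℕ → Iv → Prop
  | 0, w => w.2 = w.1
  | 1, w => w.2 = w.1 + 1
  | (n + 2), w => ∃ q : ℕ → Iv, IsOpConcat R (n + 1) q ∧ (q n).1 = w.1 ∧ (q 0).2 = w.2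

/-! ### The combinatorial model of a monomial (string) bound quiver -/

/-- A finite quiver, given by raw data. -/
structure QuivData where
  V : Type
  E : Type
  src : E → V
  tgt : E → V

variable (Q : QuivData)

/-- A (nontrivial) path in `Q`: a nonempty composable list of arrows. -/
def IsPathL (l : List Q.E) : Prop :=
  l ≠ [] ∧ l.Chain' fun a b => Q.tgt a = Q.src b

/-- The source vertex of a nonempty list of arrows (as an `Option`). -/
def psrc (l : List Q.E) : Option Q.V := l.head?.map Q.src

/-- The target vertex of a nonempty list of arrows (as an `Option`). -/
def ptgt (l : List Q.E) : Option Q.V := l.getLast?.map Q.tgt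

/-- `l` lies in the (monomial) ideal `I = ⟨R⟩`: some relation divides `l`. -/
def inI (R : Set (List Q.E)) (l : List Q.E) : Prop := ∃ r ∈ R, r <:+: l

/-- `l` belongs to the canonical basis `𝒫` of `A = kQ/I`: a nontrivial path
not in `I`.  (Trivial paths `e_x` are treated separately.) -/
def isP (R : Set (List Q.E)) (l : List Q.E) : Prop := IsPathL Q l ∧ ¬ inI Q R l

/-- `(Q, R)` presents a **triangular string algebra**: relations are paths of
length `≥ 2`, form a reduced (minimal) generating set, the string conditions
S1), S2) hold, and `Q` has no oriented cycles. -/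
structure StringData (R : Set (List Q.E)) : Prop where
  relPath : ∀ r ∈ R, IsPathL Q r ∧ 2 ≤ r.length
  relMin : ∀ r ∈ R, ∀ r' ∈ R, r' <:+: r → r' = r
  srcTwo : ∀ v : Q.V, ∀ a b c : Q.E, Q.src a = v → Q.src b = v → Q.src c = v →
    a = b ∨ a = c ∨ b = c
  tgtTwo : ∀ v : Q.V, ∀ a b c : Q.E, Q.tgt a = v → Q.tgt b = v → Q.tgt c = v →
    a = b ∨ a = c ∨ b = c
  uniqRight : ∀ a b c : Q.E, Q.tgt a = Q.src b → Q.tgt a = Q.src c →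
    [a, b] ∉ R → [a, c] ∉ R → b = c
  uniqLeft : ∀ a b c : Q.E, Q.tgt b = Q.src a → Q.tgt c = Q.src a →
    [b, a] ∉ R → [c, a] ∉ R → b = c
  triangular : ∀ l : List Q.E, IsPathL Q l → psrc Q l ≠ ptgt Q l

/-- The subpath of `l` occupying the positions `[c.1, c.2)`. -/
def slice (l : List Q.E) (c : Iv) : List Q.E := (l.drop c.1).take (c.2 - c.1)

/-- The intervals of positions of `w` occupied by relations of `R`. -/
def relIvs (R : Set (List Q.E)) (w : List Q.E) : Set Iv :=
  {c | c.1 < c.2 ∧ c.2 ≤ w.length ∧ slice Q w c ∈ R}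

/-- `w ∈ AP_n` : `w` is the support of an `n`-concatenation of relations of
`R` (for `n = 1`, an arrow; the vertices `AP_0` are treated separately). -/
def IsAP (R : Set (List Q.E)) : ℕ → List Q.E → Prop
  | 0, _ => False
  | 1, w => IsPathL Q w ∧ w.length = 1
  | (n + 2), w => IsPathL Q w ∧ IsSupport (relIvs Q R w) (n + 2) (0, w.length)

/-- `w ∈ AP_n^{op}` : `w` is the support of an `n`-op-concatenation. -/
def IsAPop (R : Set (List Q.E)) : ℕ → List Q.E → Prop
  | 0, _ => False
  | 1, w => IsPathL Q w ∧ w.length = 1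
  | (n + 2), w => IsPathL Q w ∧ IsOpSupport (relIvs Q R w) (n + 2) (0, w.length)

/-- A pair of parallel paths. -/
abbrev Pr := List Q.E × List Q.E

/-- The set `(AP_n ∥ 𝒫)` of pairs `(ρ, γ)` with `ρ ∈ AP_n`, `γ ∈ 𝒫` and
`ρ, γ` parallel; it indexes a basis of `Hom_{E-E}(kAP_n, A)`. -/
def PairSet (R : Set (List Q.E)) (n : ℕ) : Set (Pr Q) :=
  {x | IsAP Q R n x.1 ∧ isP Q R x.2 ∧ psrc Q x.1 = psrc Q x.2 ∧ ptgt Q x.1 = ptgt Q x.2}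

/-- `ρ` and `γ` have the same first arrow. -/
def sharesFirst (x : Pr Q) : Prop := x.1.head? = x.2.head?

/-- `ρ` and `γ` have the same last arrow. -/
def sharesLast (x : Pr Q) : Prop := x.1.getLast? = x.2.getLast?

/-- The class `(0,0)_n`. -/
def cls00 (R : Set (List Q.E)) (n : ℕ) : Set (Pr Q) :=
  {x ∈ PairSet Q R n | ¬ sharesFirst Q x ∧ ¬ sharesLast Q x}

/-- The class `(1,0)_n`. -/
def cls10 (R : Set (List Q.E)) (n : ℕ) : Set (Pr Q) :=
  {x ∈ PairSet Q R n | sharesFirst Q x ∧ ¬ sharesLast Q x}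

/-- The class `(0,1)_n`. -/
def cls01 (R : Set (List Q.E)) (n : ℕ) : Set (Pr Q) :=
  {x ∈ PairSet Q R n | ¬ sharesFirst Q x ∧ sharesLast Q x}

/-- The class `(1,1)_n`. -/
def cls11 (R : Set (List Q.E)) (n : ℕ) : Set (Pr Q) :=
  {x ∈ PairSet Q R n | sharesFirst Q x ∧ sharesLast Q x}

/-- `Q_1 · γ ⊆ I` (left decoration `⁻`). -/
def leftI (R : Set (List Q.E)) (γ : List Q.E) : Prop :=
  ∀ b : Q.E, some (Q.tgt b) = psrc Q γ → inI Q R (b :: γ)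

/-- `γ · Q_1 ⊆ I` (right decoration `⁻`). -/
def rightI (R : Set (List Q.E)) (γ : List Q.E) : Prop :=
  ∀ b : Q.E, some (Q.src b) = ptgt Q γ → inI Q R (γ ++ [b])

/-- `Q_1 · γ̂ ⊆ I` where `γ = γ̂ α₂`, i.e. `γ̂ = γ.dropLast`. -/
def leftIHat (R : Set (List Q.E)) (γ : List Q.E) : Prop :=
  ∀ b : Q.E, some (Q.tgt b) = psrc Q γ → inI Q R (b :: γ.dropLast)

/-- `γ̂ · Q_1 ⊆ I` where `γ = α₁ γ̂`, i.e. `γ̂ = γ.tail`. -/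
def rightIHat (R : Set (List Q.E)) (γ : List Q.E) : Prop :=
  ∀ b : Q.E, some (Q.src b) = ptgt Q γ → inI Q R (γ.tail ++ [b])

/-- `⁻(0,0)⁻_n`. -/
def mm00 (R : Set (List Q.E)) (n : ℕ) : Set (Pr Q) :=
  {x ∈ cls00 Q R n | leftI Q R x.2 ∧ rightI Q R x.2}

/-- `⁻(0,1)_n`. -/
def m01 (R : Set (List Q.E)) (n : ℕ) : Set (Pr Q) :=
  {x ∈ cls01 Q R n | leftI Q R x.2}

/-- `⁺⁻(0,1)_n`. -/
def pm01 (R : Set (List Q.E)) (n : ℕ) : Set (Pr Q) :=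
  {x ∈ cls01 Q R n | leftI Q R x.2 ∧ ¬ leftIHat Q R x.2}

/-- `⁻⁻(0,1)_n`. -/
def mm01 (R : Set (List Q.E)) (n : ℕ) : Set (Pr Q) :=
  {x ∈ cls01 Q R n | leftI Q R x.2 ∧ leftIHat Q R x.2}

/-- `(1,0)_n⁻`. -/
def m10 (R : Set (List Q.E)) (n : ℕ) : Set (Pr Q) :=
  {x ∈ cls10 Q R n | rightI Q R x.2}

/-! ### The Hochschild complex obtained from Bardzell's resolution -/

variable (k : Type) [Field k]

/-- The `(y, x)` matrix entry of the differential `F_n` of the Hochschild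
complex: for `x = (w, γ) ∈ (AP_n ∥ 𝒫)` and `y = (ψ, γ') ∈ (AP_{n-1} ∥ 𝒫)`, the
signed number of ways of dividing `w = L(ψ) ψ R(ψ)` (with `L, R` not both
trivial) so that `γ = L(ψ) γ' R(ψ)`; the sign is `(-1)^n` for the division
with trivial `L(ψ)` (this reproduces `F_{2m}` and `F_{2m+1}` of the paper). -/
def coeffF (R : Set (List Q.E)) (n : ℕ) (y x : Pr Q) : k :=
  ∑ᶠ c : Iv,
    if c.1 < c.2 ∧ c.2 ≤ x.1.length ∧ ¬(c.1 = 0 ∧ c.2 = x.1.length) ∧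
        y.1 = slice Q x.1 c ∧ x.2 = x.1.take c.1 ++ y.2 ++ x.1.drop c.2 then
      (if c.1 = 0 then (-1 : k) ^ n else 1)
    else 0

/-- The differential `F_n : Hom_{E-E}(kAP_{n-1}, A) → Hom_{E-E}(kAP_n, A)`
(`n ≥ 2`), in the bases `(AP_{n-1} ∥ 𝒫)`, `(AP_n ∥ 𝒫)`. -/
def F (R : Set (List Q.E)) (n : ℕ) [Fintype ↥(PairSet Q R (n - 1))] :
    (↥(PairSet Q R (n - 1)) → k) →ₗ[k] (↥(PairSet Q R n) → k) :=
  Matrix.mulVecLin (Matrix.of fun x y => coeffF Q k R n y.val x.val)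

/-- The differential `F_1 : Hom_{E-E}(kAP_0, A) → Hom_{E-E}(kAP_1, A)`; for a
triangular algebra `Hom_{E-E}(kAP_0, A) ≅ kQ_0`. -/
def F1 (R : Set (List Q.E)) [Fintype Q.V] [Fintype ↥(PairSet Q R 1)] :
    (Q.V → k) →ₗ[k] (↥(PairSet Q R 1) → k) :=
  Matrix.mulVecLin (Matrix.of fun x v =>
    if x.val.2 = x.val.1 then
      (if ptgt Q x.val.1 = some v then (1 : k) else 0) -
        (if psrc Q x.val.1 = some v then (1 : k) else 0)
    else 0)

/-- `HH^0(A) = Ker F_1`. -/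
abbrev HH0 (R : Set (List Q.E)) [Fintype Q.V] [Fintype ↥(PairSet Q R 1)] :=
  ↥(LinearMap.ker (F1 Q k R))

/-- `HH^1(A) = Ker F_2 / Im F_1`. -/
abbrev HH1 (R : Set (List Q.E)) [Fintype Q.V] [∀ j, Fintype ↥(PairSet Q R j)] :=
  ↥(LinearMap.ker (F Q k R 2)) ⧸
    Submodule.comap (LinearMap.ker (F Q k R 2)).subtype (LinearMap.range (F1 Q k R))

/-- `HH^n(A) = Ker F_{n+1} / Im F_n` for `n ≥ 2`. -/
abbrev HHn (R : Set (List Q.E)) (n : ℕ) [∀ j, Fintype ↥(PairSet Q R j)] :=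
  ↥(LinearMap.ker (F Q k R (n + 1))) ⧸
    Submodule.comap (LinearMap.ker (F Q k R (n + 1))).subtype (LinearMap.range (F Q k R n))

/-- The underlying graph of `Q` is connected. -/
def connectedQ : Prop :=
  (SimpleGraph.fromRel fun u v => ∃ a : Q.E, Q.src a = u ∧ Q.tgt a = v).Connected

/-- The underlying graph of the finite quiver `Q` is a tree (connected with
`|Q_1| = |Q_0| - 1`). -/
def IsTreeQuiv [Fintype Q.V] [Fintype Q.E] : Prop :=
  connectedQ Q ∧ Fintype.card Q.E + 1 = Fintype.card Q.V

/-- A monomial algebra is simply connected iff its quiver is a tree; we use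
this characterization as the definition of simple connectedness. -/
def SimplyConnected [Fintype Q.V] [Fintype Q.E] : Prop := IsTreeQuiv Q




section Graph
open SimpleGraph

variable {V : Type} [Fintype V]

/-- A connected graph on `n` vertices has at least `n-1` edges. -/
lemma conn_card_le (G : SimpleGraph V) [Fintype G.edgeSet] (h : G.Connected) :
    Fintype.card V ≤ G.edgeFinset.card + 1 := by
  classical
  obtain ⟨r⟩ := h.nonempty
  -- for each v ≠ r pick a neighbor strictly closer to r
  have key : ∀ v : V, v ≠ r → ∃ w : V, G.Adj v w ∧ G.dist w r + 1 = G.dist v r := by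
    intro v hv
    obtain ⟨p, hp⟩ := h.exists_walk_length_eq_dist v r
    cases p with
    | nil => exact absurd rfl hv
    | cons hadj q =>
      rename_i w
      refine ⟨w, hadj, ?_⟩
      have h1 : G.dist w r ≤ q.length := dist_le q
      have h2 : G.dist v r ≤ G.dist w r + 1 := by
        obtain ⟨q', hq'⟩ := h.exists_walk_length_eq_dist w r
        have := dist_le (SimpleGraph.Walk.cons hadj q')
        simpa [hq', Nat.add_comm] using this
      have h3 : q.length + 1 = G.dist v r := by simpa using hp
      omega
  choose w hw hd using key
  have hinj : Function.Injective
      (fun v : {v : V // v ≠ r} =>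
        (⟨s(v.1, w v.1 v.2), by simp [mem_edgeFinset, (hw v.1 v.2)]⟩ :
          {e // e ∈ G.edgeFinset})) := by
    rintro ⟨a, ha⟩ ⟨b, hb⟩ hab
    simp only [Subtype.mk.injEq, Sym2.eq, Sym2.rel_iff', Prod.mk.injEq, Prod.swap_prod_mk] at hab
    rcases hab with ⟨rfl, -⟩ | ⟨h1, h2⟩
    · rfl
    · exfalso
      have da := hd a ha
      have db := hd b hb
      rw [h2] at da
      rw [← h1] at db
      omega
  have hle := Fintype.card_le_of_injective _ hinj
  rw [Fintype.card_coe] at hle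
  have hcs : Fintype.card {v : V // v ≠ r} = Fintype.card V - 1 := by
    simp [Fintype.card_subtype_compl]
  have hpos : 0 < Fintype.card V := Fintype.card_pos_iff.mpr ⟨r⟩
  rw [hcs] at hle
  omega

/-- A connected graph with `|E| + 1 = |V|` is a tree. -/
lemma conn_card_isTree (G : SimpleGraph V) [Fintype G.edgeSet] (h : G.Connected)
    (hc : G.edgeFinset.card + 1 = Fintype.card V) : G.IsTree := by
  classical
  refine ⟨h, ?_⟩
  rw [isAcyclic_iff_forall_edge_isBridge]
  intro e he
  by_contra hbr
  induction e with
  | _ u v =>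
    rw [mem_edgeSet] at he
    rw [isBridge_iff] at hbr
    push_neg at hbr
    have hreach : (G \ fromEdgeSet {s(u, v)}).Reachable u v := hbr
    set G' := G \ fromEdgeSet {s(u, v)} with hG'
    have hadj' : ∀ x y : V, G.Adj x y → G'.Reachable x y := by
      intro x y hxy
      by_cases hxe : s(x, y) = s(u, v)
      · rw [Sym2.eq_iff] at hxe
        rcases hxe with ⟨rfl, rfl⟩ | ⟨rfl, rfl⟩
        · exact hreach
        · exact hreach.symm
      · exact SimpleGraph.Adj.reachable (by
          simp only [hG', sdiff_adj, fromEdgeSet_adj]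
          exact ⟨hxy, fun hh => hxe hh.1⟩)
    have hconn' : G'.Connected := by
      rw [connected_iff]
      refine ⟨fun x y => ?_, h.nonempty⟩
      obtain ⟨p⟩ := h x y
      induction p with
      | nil => exact Reachable.refl _
      | cons ha q ih => exact (hadj' _ _ ha).trans ih
    haveI : Fintype (G'.edgeSet) := Fintype.ofFinite _
    have hEs : G'.edgeSet = G.edgeSet \ {s(u, v)} := by
      simp [hG', edgeSet_sdiff, edgeSet_fromEdgeSet, edgeSet_sdiff_sdiff_isDiag]
    have hcard' : G'.edgeFinset.card + 1 ≤ G.edgeFinset.card := by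
      have hsub : G'.edgeFinset ⊆ G.edgeFinset.erase s(u, v) := by
        intro e' he'
        rw [mem_edgeFinset] at he'
        rw [hEs] at he'
        simp only [Set.mem_diff, Set.mem_singleton_iff] at he'
        exact Finset.mem_erase.mpr ⟨he'.2, mem_edgeFinset.mpr he'.1⟩
      calc G'.edgeFinset.card + 1 ≤ (G.edgeFinset.erase s(u, v)).card + 1 :=
            by exact Nat.add_le_add_right (Finset.card_le_card hsub) 1
        _ ≤ G.edgeFinset.card := by
            have hm : s(u, v) ∈ G.edgeFinset := mem_edgeFinset.mpr he
            have h1 := Finset.card_erase_of_mem hm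
            have h2 : 0 < G.edgeFinset.card := Finset.card_pos.mpr ⟨_, hm⟩
            omega
    have := conn_card_le G' hconn'
    omega

end Graph
/-! ### Auxiliary development -/

section Aux

open SimpleGraph

variable {Q : QuivData} {R : Set (List Q.E)}

/-- The underlying graph of the quiver. -/
def GQ (Q : QuivData) : SimpleGraph Q.V :=
  SimpleGraph.fromRel fun u v => ∃ a : Q.E, Q.src a = u ∧ Q.tgt a = v

lemma connectedQ_iff : connectedQ Q ↔ (GQ Q).Connected := Iff.rfl

lemma psrc_cons (a : Q.E) (l : List Q.E) : psrc Q (a :: l) = some (Q.src a) := rfl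

lemma src_ne_tgt (hs : StringData Q R) (a : Q.E) : Q.src a ≠ Q.tgt a := by
  have h := hs.triangular [a] ⟨by simp, List.isChain_singleton a⟩
  simpa [psrc, ptgt] using h

lemma adj_GQ (hs : StringData Q R) (a : Q.E) : (GQ Q).Adj (Q.src a) (Q.tgt a) := by
  rw [GQ, SimpleGraph.fromRel_adj]
  exact ⟨src_ne_tgt hs a, Or.inl ⟨a, rfl, rfl⟩⟩

lemma edge_GQ (e : Sym2 Q.V) (he : e ∈ (GQ Q).edgeSet) :
    ∃ a : Q.E, e = s(Q.src a, Q.tgt a) := by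
  induction e with
  | _ u v =>
    rw [SimpleGraph.mem_edgeSet, GQ, SimpleGraph.fromRel_adj] at he
    rcases he with ⟨-, ⟨a, rfl, rfl⟩ | ⟨a, rfl, rfl⟩⟩
    · exact ⟨a, rfl⟩
    · exact ⟨a, Sym2.eq_swap⟩

/-- The source vertex is not among the targets along a path. -/
lemma src_not_mem_tgts (hs : StringData Q R) {l : List Q.E} {u : Q.V}
    (hp : IsPathL Q l) (hu : psrc Q l = some u) : u ∉ l.map Q.tgt := by
  intro hmem
  rw [List.mem_map] at hmem
  obtain ⟨a, ha, rfl⟩ := hmem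
  obtain ⟨s, t, rfl⟩ := List.append_of_mem ha
  have hpre : (s ++ [a]) <+: (s ++ a :: t) := ⟨t, by simp⟩
  have hpath : IsPathL Q (s ++ [a]) := ⟨by simp, hp.2.prefix hpre⟩
  have hsrc : psrc Q (s ++ [a]) = some (Q.tgt a) := by
    cases s with
    | nil =>
      simp only [List.nil_append] at hu ⊢
      exact hu
    | cons b s' =>
      simp only [List.cons_append, psrc_cons] at hu ⊢
      exact hu
  have htgt : ptgt Q (s ++ [a]) = some (Q.tgt a) := by
    simp [ptgt]
  exact hs.triangular _ hpath (hsrc.trans htgt.symm)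

lemma chain_tail {a : Q.E} {l : List Q.E} (h : IsPathL Q (a :: l)) (hl : l ≠ []) :
    IsPathL Q l ∧ psrc Q l = some (Q.tgt a) := by
  cases l with
  | nil => exact absurd rfl hl
  | cons b t =>
    have h2 := List.isChain_cons_cons.mp h.2
    exact ⟨⟨by simp, h2.2⟩, by rw [psrc_cons, h2.1]⟩

/-- The vertices along a path are distinct. -/
lemma verts_nodup (hs : StringData Q R) :
    ∀ (l : List Q.E) (u : Q.V), IsPathL Q l → psrc Q l = some u →
      (u :: l.map Q.tgt).Nodup := by
  intro l
  induction l with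
  | nil => intro u h; exact absurd h.1 (by simp)
  | cons a t ih =>
    intro u hp hu
    rw [psrc_cons, Option.some_inj] at hu
    subst hu
    refine List.nodup_cons.mpr ⟨src_not_mem_tgts hs hp rfl, ?_⟩
    cases t with
    | nil => simp
    | cons b t' =>
      obtain ⟨hp', hsrc'⟩ := chain_tail hp (by simp)
      have := ih (Q.tgt a) hp' hsrc'
      simpa using this

/-- A path in the quiver gives a walk in the underlying graph with prescribed support. -/
lemma exists_walk (hs : StringData Q R) :
    ∀ (l : List Q.E) (u v : Q.V), IsPathL Q l → psrc Q l = some u → ptgt Q l = some v →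
      ∃ w : (GQ Q).Walk u v, w.support = u :: l.map Q.tgt := by
  intro l
  induction l with
  | nil => intro u v h; exact absurd h.1 (by simp)
  | cons a t ih =>
    intro u v hp hu hv
    rw [psrc_cons, Option.some_inj] at hu
    subst hu
    cases t with
    | nil =>
      rw [ptgt] at hv
      simp only [List.getLast?_singleton, Option.map_some, Option.some_inj] at hv
      subst hv
      exact ⟨SimpleGraph.Walk.cons (adj_GQ hs a) SimpleGraph.Walk.nil, by simp⟩
    | cons b t' =>
      obtain ⟨hp', hsrc'⟩ := chain_tail hp (by simp)
      have hv' : ptgt Q (b :: t') = some v := by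
        rw [ptgt] at hv ⊢
        simpa using hv
      obtain ⟨w, hw⟩ := ih (Q.tgt a) v hp' hsrc' hv'
      exact ⟨SimpleGraph.Walk.cons (adj_GQ hs a) w, by simp [hw]⟩

end Aux
section Aux2

open SimpleGraph

variable {Q : QuivData} {R : Set (List Q.E)} [Fintype Q.V] [Fintype Q.E]

/-- In a tree quiver, the arrow-to-edge map is injective, and the graph is a tree. -/
lemma tree_struct (hs : StringData Q R) (ht : IsTreeQuiv Q) :
    (GQ Q).IsTree ∧ Function.Injective (fun a : Q.E => s(Q.src a, Q.tgt a)) := by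
  classical
  haveI : Fintype ↥(GQ Q).edgeSet := Fintype.ofFinite _
  have hconn : (GQ Q).Connected := ht.1
  have hsurj : Function.Surjective
      (fun a : Q.E => (⟨s(Q.src a, Q.tgt a), (adj_GQ hs a)⟩ : (GQ Q).edgeSet)) := by
    rintro ⟨e, he⟩
    obtain ⟨a, rfl⟩ := edge_GQ e he
    exact ⟨a, rfl⟩
  have hle1 : Fintype.card ↥(GQ Q).edgeSet ≤ Fintype.card Q.E :=
    Fintype.card_le_of_surjective _ hsurj
  have hle2 : Fintype.card Q.V ≤ (GQ Q).edgeFinset.card + 1 := conn_card_le _ hconn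
  rw [edgeFinset_card] at hle2
  have hVE := ht.2
  have hcard : Fintype.card ↥(GQ Q).edgeSet = Fintype.card Q.E := by omega
  have hbij : Function.Bijective
      (fun a : Q.E => (⟨s(Q.src a, Q.tgt a), (adj_GQ hs a)⟩ : (GQ Q).edgeSet)) :=
    (Fintype.bijective_iff_surjective_and_card _).mpr ⟨hsurj, hcard.symm⟩
  refine ⟨conn_card_isTree _ hconn ?_, ?_⟩
  · rw [edgeFinset_card, hcard]
    exact ht.2
  · intro a b hab
    exact hbij.1 (Subtype.ext hab)

/-- Recover a list of arrows from its vertex sequence. -/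
lemma arrows_of_verts (hinj : Function.Injective (fun a : Q.E => s(Q.src a, Q.tgt a))) :
    ∀ (l₁ l₂ : List Q.E), l₁.Chain' (fun a b => Q.tgt a = Q.src b) →
      l₂.Chain' (fun a b => Q.tgt a = Q.src b) → psrc Q l₁ = psrc Q l₂ →
      l₁.map Q.tgt = l₂.map Q.tgt → l₁ = l₂ := by
  intro l₁
  induction l₁ with
  | nil =>
    intro l₂ _ _ _ hm
    cases l₂ with
    | nil => rfl
    | cons b t => simp at hm
  | cons a t₁ ih =>
    intro l₂ hc₁ hc₂ hsrc hm
    cases l₂ with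
    | nil => simp at hm
    | cons b t₂ =>
      simp only [List.map_cons, List.cons.injEq] at hm
      obtain ⟨htgt, hm'⟩ := hm
      simp only [psrc_cons, Option.some_inj] at hsrc
      have hab : a = b := by
        apply hinj
        simp only
        rw [hsrc, htgt]
      subst hab
      refine congrArg _ (ih t₂ hc₁.tail hc₂.tail ?_ hm')
      cases t₁ with
      | nil =>
        cases t₂ with
        | nil => rfl
        | cons c t => simp at hm'
      | cons c s₁ =>
        cases t₂ with
        | nil => simp at hm'
        | cons d s₂ =>
          rw [psrc_cons, psrc_cons, ← (List.isChain_cons_cons.mp hc₁).1,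
            ← (List.isChain_cons_cons.mp hc₂).1]

/-- In a tree, parallel paths coincide. -/
lemma parallel_eq (hs : StringData Q R) (ht : IsTreeQuiv Q) {l₁ l₂ : List Q.E}
    (h₁ : IsPathL Q l₁) (h₂ : IsPathL Q l₂) (hsrc : psrc Q l₁ = psrc Q l₂)
    (htgt : ptgt Q l₁ = ptgt Q l₂) : l₁ = l₂ := by
  obtain ⟨htree, hinj⟩ := tree_struct hs ht
  obtain ⟨a₁, t₁, rfl⟩ := List.exists_cons_of_ne_nil h₁.1
  have hu : psrc Q (a₁ :: t₁) = some (Q.src a₁) := rfl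
  obtain ⟨v, hv⟩ : ∃ v, ptgt Q (a₁ :: t₁) = some v := by
    simp [ptgt, List.getLast?_cons]
  obtain ⟨w₁, hw₁⟩ := exists_walk hs _ _ _ h₁ hu hv
  obtain ⟨w₂, hw₂⟩ := exists_walk hs _ _ _ h₂ (hsrc ▸ hu) (htgt ▸ hv)
  have hp₁ : w₁.IsPath := by
    rw [SimpleGraph.Walk.isPath_def, hw₁]
    exact verts_nodup hs _ _ h₁ hu
  have hp₂ : w₂.IsPath := by
    rw [SimpleGraph.Walk.isPath_def, hw₂]
    exact verts_nodup hs _ _ h₂ (hsrc ▸ hu)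
  have hww : w₁ = w₂ := congrArg Subtype.val (htree.IsAcyclic.path_unique ⟨w₁, hp₁⟩ ⟨w₂, hp₂⟩)
  have hsupp : Q.src a₁ :: List.map Q.tgt (a₁ :: t₁) = Q.src a₁ :: List.map Q.tgt l₂ := by
    rw [← hw₁, ← hw₂, hww]
  simp only [List.cons.injEq, true_and] at hsupp
  exact arrows_of_verts hinj _ _ h₁.2 h₂.2 hsrc hsupp

end Aux2
section Aux3

variable {Q : QuivData} {R : Set (List Q.E)}

/-- Every arrow gives a diagonal element of `(AP_1 ∥ 𝒫)`. -/
lemma pair_mem (hs : StringData Q R) (a : Q.E) : (([a], [a]) : Pr Q) ∈ PairSet Q R 1 := by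
  have hpath : IsPathL Q [a] := ⟨by simp, List.isChain_singleton a⟩
  have hni : ¬ inI Q R [a] := by
    rintro ⟨r, hr, hinf⟩
    have h2 := (hs.relPath r hr).2
    have := hinf.length_le
    simp at this
    omega
  exact ⟨⟨hpath, by simp⟩, ⟨hpath, hni⟩, rfl, rfl⟩

/-- `AP_n ⊆ I` for `n ≥ 2`. -/
lemma AP_inI {n : ℕ} (hn : 2 ≤ n) {w : List Q.E} (h : IsAP Q R n w) : inI Q R w := by
  obtain ⟨m, rfl⟩ : ∃ m, n = m + 2 := ⟨n - 2, by omega⟩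
  obtain ⟨-, p, hc, -, -⟩ := h
  obtain ⟨hlt, hle, hmem⟩ := hc.1
  exact ⟨slice Q w (p 0), hmem,
    ((List.take_prefix _ _).isInfix).trans (List.drop_suffix _ _).isInfix⟩

lemma AP_isPathL {n : ℕ} (hn : 1 ≤ n) {w : List Q.E} (h : IsAP Q R n w) : IsPathL Q w := by
  match n, hn with
  | 1, _ => exact h.1
  | (m + 2), _ => exact h.1

/-- `AP_2 = R`. -/
lemma AP2_mem (h : IsAP Q R 2 (w : List Q.E)) : w ∈ R := by
  obtain ⟨-, p, hc, h0, h1⟩ := h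
  obtain ⟨hlt, hle, hmem⟩ := hc.1
  have : p 0 = (0, w.length) := Prod.ext h0 h1
  rw [this] at hmem
  simpa [slice] using hmem

lemma slice_recomb {l : List Q.E} {c : Iv} (h : c.1 ≤ c.2) :
    l.take c.1 ++ slice Q l c ++ l.drop c.2 = l := by
  rw [slice, List.append_assoc]
  have : l.drop c.2 = (l.drop c.1).drop (c.2 - c.1) := by
    rw [List.drop_drop]
    congr 1
    omega
  rw [this, List.take_append_drop, List.take_append_drop]

/-- Diagonal coefficients of `F₂` vanish. -/
lemma coeff_diag_zero (k : Type) [Field k] {y : Pr Q} (hy : y.2 = y.1)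
    (x : Pr Q) (hx : x ∈ PairSet Q R 2) : coeffF Q k R 2 y x = 0 := by
  have : ∀ c : Iv, (if c.1 < c.2 ∧ c.2 ≤ x.1.length ∧ ¬(c.1 = 0 ∧ c.2 = x.1.length) ∧
        y.1 = slice Q x.1 c ∧ x.2 = x.1.take c.1 ++ y.2 ++ x.1.drop c.2 then
      (if c.1 = 0 then (-1 : k) ^ 2 else 1)
    else 0) = 0 := by
    intro c
    rw [if_neg]
    rintro ⟨hlt, hle, -, hsl, hcomb⟩
    have hxx : x.2 = x.1 := by
      rw [hcomb, hy, hsl, slice_recomb (le_of_lt hlt)]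
    have hR : x.1 ∈ R := AP2_mem hx.1
    exact hx.2.1.2 (hxx ▸ ⟨x.1, hR, List.infix_refl _⟩)
  rw [coeffF]
  rw [funext this]
  exact finsum_zero

end Aux3
section Aux4

open Module

variable {Q : QuivData} {R : Set (List Q.E)} (k : Type) [Field k]
variable [Fintype Q.V] [Fintype Q.E] [∀ j, Fintype ↥(PairSet Q R j)]

/-- The diagonal element of `(AP_1 ∥ 𝒫)` attached to an arrow. -/
def pairElt (hs : StringData Q R) (a : Q.E) : ↥(PairSet Q R 1) :=
  ⟨([a], [a]), pair_mem hs a⟩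

lemma pairElt_inj (hs : StringData Q R) : Function.Injective (pairElt (R := R) hs) := by
  intro a b hab
  have := congrArg (fun x => x.val.1) hab
  simpa [pairElt] using this

lemma single_mem_ker (hs : StringData Q R) (a : Q.E) :
    Pi.single (pairElt hs a) (1 : k) ∈ LinearMap.ker (F Q k R 2) := by
  classical
  rw [LinearMap.mem_ker]
  funext x
  rw [F, Matrix.mulVecLin_apply]
  simp only [Matrix.mulVec, Matrix.of_apply]
  unfold dotProduct
  refine Finset.sum_eq_zero fun y _ => ?_
  by_cases hy : y = pairElt hs a
  · subst hy
    have h0 : coeffF Q k R 2 (pairElt hs a).val x.val = 0 :=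
      coeff_diag_zero k rfl x.val x.property
    simp [h0]
  · simp [Pi.single_eq_of_ne hy]

lemma F1_apply_pairElt (hs : StringData Q R) (f : Q.V → k) (a : Q.E) :
    F1 Q k R f (pairElt hs a) = f (Q.tgt a) - f (Q.src a) := by
  classical
  rw [F1, Matrix.mulVecLin_apply]
  simp only [Matrix.mulVec, Matrix.of_apply, pairElt]
  have h1 : ptgt Q [a] = some (Q.tgt a) := by simp [ptgt]
  have h2 : psrc Q [a] = some (Q.src a) := by simp [psrc]
  unfold dotProduct
  simp only [h1, h2, if_pos rfl, Option.some.injEq, sub_mul, Finset.sum_sub_distrib,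
    ite_mul, one_mul, zero_mul, Finset.sum_ite_eq, Finset.mem_univ, if_true]

lemma F1_diag_entries (f : Q.V → k) (x : ↥(PairSet Q R 1)) (hx : ¬ x.val.2 = x.val.1) :
    F1 Q k R f x = 0 := by
  classical
  rw [F1, Matrix.mulVecLin_apply]
  simp only [Matrix.mulVec, Matrix.of_apply, if_neg hx]
  unfold dotProduct
  simp

lemma F1_one_eq_zero : F1 Q k R (fun _ => (1 : k)) = 0 := by
  classical
  funext x
  by_cases hx : x.val.2 = x.val.1
  · obtain ⟨⟨h11, h12⟩, -, -, -⟩ := x.property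
    obtain ⟨a, ha⟩ := List.length_eq_one_iff.mp h12
    rw [F1, Matrix.mulVecLin_apply]
    simp only [Matrix.mulVec, Matrix.of_apply, if_pos hx]
    have h1 : ptgt Q x.val.1 = some (Q.tgt a) := by rw [ha]; simp [ptgt]
    have h2 : psrc Q x.val.1 = some (Q.src a) := by rw [ha]; simp [psrc]
    unfold dotProduct
    simp [h1, h2, Finset.sum_sub_distrib, Finset.sum_ite_eq]
  · rw [F1_diag_entries k _ x hx]; rfl

lemma ker_F1_le_span (hs : StringData Q R) (hconn : connectedQ Q) :
    LinearMap.ker (F1 Q k R) ≤ Submodule.span k {(fun _ => (1 : k) : Q.V → k)} := by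
  intro f hf
  rw [LinearMap.mem_ker] at hf
  have harr : ∀ a : Q.E, f (Q.tgt a) = f (Q.src a) := by
    intro a
    have := congrFun hf (pairElt hs a)
    rw [F1_apply_pairElt k hs f a] at this
    have h0 : f (Q.tgt a) - f (Q.src a) = 0 := this
    exact sub_eq_zero.mp h0
  have hadj : ∀ u v : Q.V, (GQ Q).Adj u v → f u = f v := by
    intro u v huv
    rw [GQ, SimpleGraph.fromRel_adj] at huv
    rcases huv with ⟨-, ⟨a, rfl, rfl⟩ | ⟨a, rfl, rfl⟩⟩
    · exact (harr a).symm
    · exact harr a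
  have hconn' : (GQ Q).Connected := hconn
  have hconst : ∀ u v : Q.V, f u = f v := by
    intro u v
    obtain ⟨w⟩ := hconn' u v
    induction w with
    | nil => rfl
    | cons h p ih => exact (hadj _ _ h).trans ih
  obtain ⟨r⟩ := hconn'.nonempty
  rw [Submodule.mem_span_singleton]
  exact ⟨f r, funext fun v => by simp [hconst r v]⟩

lemma card_P1 (hs : StringData Q R) (ht : IsTreeQuiv Q) :
    Fintype.card ↥(PairSet Q R 1) = Fintype.card Q.E := by
  refine (Fintype.card_of_bijective (f := pairElt (R := R) hs) ⟨pairElt_inj hs, ?_⟩).symm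
  rintro ⟨⟨w, γ⟩, hw, hγ, hsrc, htgt⟩
  obtain ⟨a, rfl⟩ := List.length_eq_one_iff.mp hw.2
  have : γ = [a] := (parallel_eq hs ht hγ.1 hw.1 hsrc.symm htgt.symm)
  exact ⟨a, by simp [pairElt, this]⟩

lemma range_F1_top (hs : StringData Q R) (ht : IsTreeQuiv Q) :
    LinearMap.range (F1 Q k R) = ⊤ := by
  have hconn : connectedQ Q := ht.1
  have hrn := LinearMap.finrank_range_add_finrank_ker (F1 Q k R)
  have hker : finrank k ↥(LinearMap.ker (F1 Q k R)) ≤ 1 := by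
    calc finrank k ↥(LinearMap.ker (F1 Q k R))
        ≤ finrank k ↥(Submodule.span k {(fun _ => (1 : k) : Q.V → k)}) :=
          Submodule.finrank_mono (ker_F1_le_span k hs hconn)
      _ = 1 := finrank_span_singleton (by
          intro h
          obtain ⟨r⟩ := (show (GQ Q).Connected from hconn).nonempty
          have := congrFun h r
          simp at this)
  have hdom : finrank k (Q.V → k) = Fintype.card Q.V := Module.finrank_pi k
  have hcod : finrank k (↥(PairSet Q R 1) → k) = Fintype.card Q.E := by
    rw [Module.finrank_pi k, card_P1 hs ht]
  have hle : finrank k ↥(LinearMap.range (F1 Q k R)) ≤ Fintype.card Q.E := by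
    rw [← hcod]
    exact Submodule.finrank_le _
  have hVE := ht.2
  apply Submodule.eq_top_of_finrank_eq
  rw [hcod]
  omega

end Aux4
section Main

open Module

variable {Q : QuivData} {R : Set (List Q.E)} (k : Type) [Field k]
variable [Fintype Q.V] [Fintype Q.E] [∀ j, Fintype ↥(PairSet Q R j)]

lemma tree_to_hh1 (hs : StringData Q R) (ht : IsTreeQuiv Q) :
    Subsingleton (HH1 Q k R) := by
  apply Submodule.Quotient.subsingleton_iff.mpr
  rw [range_F1_top k hs ht]
  exact Submodule.comap_top _

lemma tree_to_hhn (hs : StringData Q R) (ht : IsTreeQuiv Q) (i : ℕ) (hi : 2 ≤ i) :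
    Subsingleton (HHn Q k R i) := by
  have hempty : IsEmpty ↥(PairSet Q R i) := by
    constructor
    rintro ⟨⟨w, γ⟩, hw, hγ, hsrc, htgt⟩
    have hwp : IsPathL Q w := AP_isPathL (by omega) hw
    have hwγ : γ = w := parallel_eq hs ht hγ.1 hwp hsrc.symm htgt.symm
    exact hγ.2 (by rw [hwγ]; exact AP_inI hi hw)
  have hsub : Subsingleton (↥(PairSet Q R i) → k) :=
    ⟨fun f g => funext fun x => hempty.elim x⟩
  have hker : Subsingleton ↥(LinearMap.ker (F Q k R (i + 1))) :=
    ⟨fun a b => Subtype.ext (hsub.elim a.val b.val)⟩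
  exact (Submodule.Quotient.mk_surjective _).subsingleton

lemma hh1_to_tree (hs : StringData Q R) (hconn : connectedQ Q)
    (h : Subsingleton (HH1 Q k R)) : IsTreeQuiv Q := by
  classical
  have hN := Submodule.Quotient.subsingleton_iff.mp h
  have hkr : ∀ v ∈ LinearMap.ker (F Q k R 2), v ∈ LinearMap.range (F1 Q k R) := by
    intro v hv
    have hm : (⟨v, hv⟩ : ↥(LinearMap.ker (F Q k R 2))) ∈
        Submodule.comap (LinearMap.ker (F Q k R 2)).subtype (LinearMap.range (F1 Q k R)) := by
      rw [hN]; trivial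
    simpa using Submodule.mem_comap.mp hm
  set L := (LinearMap.funLeft k k (fun a : Q.E => pairElt hs a)).comp (F1 Q k R) with hL
  have hrangeL : LinearMap.range L = ⊤ := by
    rw [Submodule.eq_top_iff']
    intro f
    have hf : f = ∑ a : Q.E, Pi.single a (f a) := (Finset.univ_sum_single f).symm
    rw [hf]
    refine Submodule.sum_mem _ fun a _ => ?_
    obtain ⟨g, hg⟩ := hkr _ (single_mem_ker k hs a)
    have hLgb : ∀ b, L g b = (Pi.single a (1 : k) : Q.E → k) b := by
      intro b
      have hstep : L g b = (F1 Q k R g) (pairElt hs b) := rfl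
      rw [hstep, hg]
      by_cases hba : b = a
      · subst hba; simp
      · rw [Pi.single_eq_of_ne (fun hc => hba (pairElt_inj hs hc)),
          Pi.single_eq_of_ne hba]
    refine ⟨f a • g, ?_⟩
    rw [map_smul]
    funext b
    rw [Pi.smul_apply, hLgb b]
    simp [Pi.single_apply, smul_eq_mul, mul_ite]
  have hrn := LinearMap.finrank_range_add_finrank_ker L
  rw [hrangeL, finrank_top] at hrn
  have hdomE : finrank k (Q.E → k) = Fintype.card Q.E := Module.finrank_pi k
  have hdomV : finrank k (Q.V → k) = Fintype.card Q.V := Module.finrank_pi k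
  obtain ⟨r⟩ := (show (GQ Q).Connected from hconn).nonempty
  have hkerpos : 0 < finrank k ↥(LinearMap.ker L) := by
    rw [Module.finrank_pos_iff_exists_ne_zero]
    refine ⟨⟨fun _ => (1 : k), ?_⟩, ?_⟩
    · rw [LinearMap.mem_ker, hL, LinearMap.comp_apply, F1_one_eq_zero k, map_zero]
    · intro hz
      have := congrFun (congrArg Subtype.val hz) r
      simp at this
  -- connectivity lower bound on edges
  haveI : Fintype ↥(GQ Q).edgeSet := Fintype.ofFinite _
  have hsurj : Function.Surjective
      (fun a : Q.E => (⟨s(Q.src a, Q.tgt a), (adj_GQ hs a)⟩ : (GQ Q).edgeSet)) := by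
    rintro ⟨e, he⟩
    obtain ⟨a, rfl⟩ := edge_GQ e he
    exact ⟨a, rfl⟩
  have hle1 : Fintype.card ↥(GQ Q).edgeSet ≤ Fintype.card Q.E :=
    Fintype.card_le_of_surjective _ hsurj
  have hle2 : Fintype.card Q.V ≤ (GQ Q).edgeFinset.card + 1 :=
    conn_card_le _ hconn
  rw [SimpleGraph.edgeFinset_card] at hle2
  exact ⟨hconn, by omega⟩

end Main

/-- **Corollary 4.6 / Statement 12.** For a connected triangular string
algebra `A = kQ/I` the following are equivalent: (i) `HH^1(A) = 0`; (ii) the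
underlying graph of `Q` is a tree; (iii) `HH^i(A) = 0` for all `i > 0`;
(iv) `A` is simply connected. -/
theorem statement12 (Q : QuivData) (R : Set (List Q.E)) (hs : StringData Q R)
    (k : Type) [Field k] [Fintype Q.V] [Fintype Q.E]
    [∀ j, Fintype ↥(PairSet Q R j)] (hconn : connectedQ Q) :
    (Subsingleton (HH1 Q k R) ↔ IsTreeQuiv Q) ∧
    (IsTreeQuiv Q ↔
      (Subsingleton (HH1 Q k R) ∧ ∀ i, 2 ≤ i → Subsingleton (HHn Q k R i))) ∧
    (IsTreeQuiv Q ↔ SimplyConnected Q) := by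
  refine ⟨⟨fun h => hh1_to_tree k hs hconn h, fun ht => tree_to_hh1 k hs ht⟩,
    ⟨fun ht => ⟨tree_to_hh1 k hs ht, fun i hi => tree_to_hhn k hs ht i hi⟩,
      fun h => hh1_to_tree k hs hconn h.1⟩, Iff.rfl⟩


end Paper
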